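/- Let M = (M_k) be a log-convex weight sequence and let A, C, ρ > 0 and an integer N ≥ 2 be given. Define ψ_N(t) := C·A·Σ_{j=2}^{N} (ρ^{j−1} M_{j−1}/j)·t^j. Then there exist real coefficients (c_i)_{i≥1} and ε > 0 such that the power series g(s) = Σ_{i≥1} c_i s^i converges for |s| < ε, satisfies g(s) = A·s + ψ_N(g(s)) for all |s| < ε, has c₁ = A, and satisfies 0 < i·c_i < A·(4A(CA+1)ρ)^{i−1}·M_{i−1} for every i with 2 ≤ i ≤ N. -/

import Mathlib

open Finset

namespace St3

noncomputable def wpos (c : ℕ → ℝ) : ℕ → ℕ → ℝ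
  | 0, i => if i = 0 then 1 else 0
  | j + 1, i =>
      ∑ ab ∈ Finset.HasAntidiagonal.antidiagonal i,
        (if 1 ≤ ab.1 then c ab.1 * wpos c j ab.2 else 0)

lemma wpos_succ (c : ℕ → ℝ) (j i : ℕ) :
    wpos c (j+1) i = ∑ ab ∈ Finset.HasAntidiagonal.antidiagonal i,
        (if 1 ≤ ab.1 then c ab.1 * wpos c j ab.2 else 0) := rfl

lemma wpos_eq_zero (c : ℕ → ℝ) : ∀ j i, i < j → wpos c j i = 0 := by
  intro j
  induction j with
  | zero => omega
  | succ j ih =>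
    intro i hi
    rw [wpos_succ]
    apply Finset.sum_eq_zero
    rintro ⟨a, b⟩ hab
    rw [Finset.HasAntidiagonal.mem_antidiagonal] at hab
    simp only
    split_ifs with h
    · rw [ih b (by omega), mul_zero]
    · rfl

lemma wpos_one (c : ℕ → ℝ) (i : ℕ) : wpos c 1 i = if 1 ≤ i then c i else 0 := by
  rw [wpos_succ]
  rw [Finset.sum_eq_single (i, 0)]
  · simp [wpos]
  · rintro ⟨a, b⟩ hab hne
    rw [Finset.HasAntidiagonal.mem_antidiagonal] at hab
    simp only
    have hb : b ≠ 0 := by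
      rintro rfl; exact hne (by simp [← hab])
    simp [wpos, hb]
  · intro h
    exact absurd (Finset.HasAntidiagonal.mem_antidiagonal.2 (by omega)) h

lemma wpos_nonneg (c : ℕ → ℝ) (hc : ∀ k, 0 ≤ c k) : ∀ j i, 0 ≤ wpos c j i := by
  intro j
  induction j with
  | zero => intro i; simp [wpos]; positivity
  | succ j ih =>
    intro i
    rw [wpos_succ]
    apply Finset.sum_nonneg
    rintro ⟨a, b⟩ _
    simp only
    split_ifs
    · exact mul_nonneg (hc a) (ih b)
    · exact le_refl 0


lemma wpos_mono (c d : ℕ → ℝ) (hc : ∀ k, 0 ≤ c k) (hcd : ∀ k, c k ≤ d k) :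
    ∀ j i, wpos c j i ≤ wpos d j i := by
  intro j
  induction j with
  | zero => intro i; simp [wpos]
  | succ j ih =>
    intro i
    rw [wpos_succ, wpos_succ]
    apply Finset.sum_le_sum
    rintro ⟨a, b⟩ _
    simp only
    split_ifs
    · exact mul_le_mul (hcd a) (ih b) (wpos_nonneg c hc j b) ((hc a).trans (hcd a))
    · exact le_refl 0

lemma wpos_congr (c c' : ℕ → ℝ) :
    ∀ j i, (∀ k, 1 ≤ k → k + j ≤ i + 1 → c k = c' k) → wpos c j i = wpos c' j i := by
  intro j
  induction j with
  | zero => intro i _; simp [wpos]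
  | succ j ih =>
    intro i h
    rw [wpos_succ, wpos_succ]
    apply Finset.sum_congr rfl
    rintro ⟨a, b⟩ hab
    rw [Finset.HasAntidiagonal.mem_antidiagonal] at hab
    simp only
    split_ifs with ha
    · by_cases hb : b < j
      · rw [wpos_eq_zero c j b hb, wpos_eq_zero c' j b hb]
        ring
      · push_neg at hb
        rw [h a ha (by omega), ih b (fun k hk hkb => h k hk (by omega))]
    · rfl

lemma cat_conv (i : ℕ) (h2 : 2 ≤ i) :
    ∑ ab ∈ Finset.HasAntidiagonal.antidiagonal i,
      (if 1 ≤ ab.1 ∧ 1 ≤ ab.2 then ((catalan (ab.1 - 1) : ℝ) * (catalan (ab.2 - 1) : ℝ)) else 0)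
      = (catalan (i - 1) : ℝ) := by
  obtain ⟨n, rfl⟩ : ∃ n, i = n + 2 := ⟨i - 2, by omega⟩
  rw [Finset.Nat.sum_antidiagonal_eq_sum_range_succ_mk]
  rw [Finset.sum_range_succ, Finset.sum_range_succ']
  have h0 : (if 1 ≤ 0 ∧ 1 ≤ n + 2 - 0 then ((catalan (0 - 1) : ℝ) * (catalan (n + 2 - 0 - 1) : ℝ)) else 0) = 0 := by
    norm_num
  have htop : (if 1 ≤ n + 2 ∧ 1 ≤ n + 2 - (n+2) then ((catalan (n + 2 - 1) : ℝ) * (catalan (n + 2 - (n+2) - 1) : ℝ)) else 0) = 0 := by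
    norm_num
  rw [h0, htop, add_zero, add_zero]
  have h21 : (n + 2 - 1) = n + 1 := by omega
  rw [h21, catalan_succ']
  rw [Finset.Nat.sum_antidiagonal_eq_sum_range_succ_mk]
  push_cast
  apply Finset.sum_congr rfl
  intro k hk
  rw [Finset.mem_range] at hk
  rw [if_pos ⟨trivial, (by omega : 1 ≤ n + 1 - k)⟩]
  have e2 : n + 1 - k - 1 = n - k := by omega
  rw [e2]


lemma catalan_pos' (n : ℕ) : 0 < catalan n := by
  rcases Nat.eq_zero_or_pos (catalan n) with h | h
  · exfalso
    have h2 := succ_mul_catalan_eq_centralBinom n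
    rw [h, mul_zero] at h2
    exact (Nat.centralBinom_pos n).ne' h2.symm
  · exact h

lemma catalan_cast_pos (n : ℕ) : (0:ℝ) < (catalan n : ℝ) := by
  exact_mod_cast catalan_pos' n

/-- Generic bound for composition sums against Catalan-weighted majorants. -/
lemma wpos_bound (A : ℝ) (hA : 0 < A) (e : ℕ → ℝ) (he0 : e 0 = 1)
    (hepos : ∀ k, 0 < e k) (hemul : ∀ a b, e a * e b ≤ e (a + b)) :
    ∀ j, 1 ≤ j → ∀ i, j ≤ i →
      wpos (fun k => A * e (k - 1) * (catalan (k - 1) : ℝ)) j i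
        ≤ A ^ j * e (i - j) * (catalan (i - 1) : ℝ) := by
  set d : ℕ → ℝ := fun k => A * e (k - 1) * (catalan (k - 1) : ℝ) with hd
  have hdpos : ∀ k, 0 < d k := by
    intro k
    exact mul_pos (mul_pos hA (hepos _)) (catalan_cast_pos _)
  intro j hj
  induction j, hj using Nat.le_induction with
  | base =>
    intro i hi
    rw [wpos_one]
    rw [if_pos hi]
    simp only [hd, pow_one]
    exact le_rfl
  | succ j hj ih =>
    intro i hi
    rw [wpos_succ]
    have key : ∀ ab ∈ Finset.HasAntidiagonal.antidiagonal i,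
        (if 1 ≤ ab.1 then d ab.1 * wpos d j ab.2 else 0) ≤
          (A ^ (j+1) * e (i - (j+1))) *
            (if 1 ≤ ab.1 ∧ 1 ≤ ab.2 then ((catalan (ab.1 - 1) : ℝ) * (catalan (ab.2 - 1) : ℝ)) else 0) := by
      rintro ⟨a, b⟩ hab
      rw [Finset.HasAntidiagonal.mem_antidiagonal] at hab
      simp only
      split_ifs with ha hab2 hab3
      · -- 1 ≤ a and (1 ≤ a ∧ 1 ≤ b)
        by_cases hbj : b < j
        · rw [wpos_eq_zero d j b hbj, mul_zero]
          have h1 : (0:ℝ) < (catalan (a-1) : ℝ) * (catalan (b-1) : ℝ) :=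
            mul_pos (catalan_cast_pos _) (catalan_cast_pos _)
          have h2 : (0:ℝ) < A ^ (j+1) * e (i - (j+1)) := by
            exact mul_pos (pow_pos hA _) (hepos _)
          positivity
        · push_neg at hbj
          have h1 : d a * wpos d j b ≤ d a * (A ^ j * e (b - j) * (catalan (b - 1) : ℝ)) :=
            mul_le_mul_of_nonneg_left (ih b hbj) (hdpos a).le
          refine h1.trans ?_
          have harith : (a - 1) + (b - j) = i - (j + 1) := by omega
          have hcatb : (0:ℝ) ≤ (catalan (b-1) : ℝ) := (catalan_cast_pos _).le
          have hcata : (0:ℝ) ≤ (catalan (a-1) : ℝ) := (catalan_cast_pos _).le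
          calc d a * (A ^ j * e (b - j) * (catalan (b - 1) : ℝ))
              = (A ^ (j+1)) * (e (a-1) * e (b-j)) * ((catalan (a-1) : ℝ) * (catalan (b-1) : ℝ)) := by
                simp only [hd]; ring
            _ ≤ (A ^ (j+1)) * e (i - (j+1)) * ((catalan (a-1) : ℝ) * (catalan (b-1) : ℝ)) := by
                apply mul_le_mul_of_nonneg_right _ (by positivity)
                apply mul_le_mul_of_nonneg_left _ (by positivity)
                rw [← harith]; exact hemul _ _
            _ = (A ^ (j+1) * e (i - (j+1))) * ((catalan (a-1) : ℝ) * (catalan (b-1) : ℝ)) := by ring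
      · -- 1 ≤ a but b = 0 : then j ≤ b fails since 1 ≤ j, so wpos = 0
        have hb0 : b = 0 := by omega
        rw [hb0, wpos_eq_zero d j 0 (by omega), mul_zero, mul_zero]
      · -- ¬ 1 ≤ a but 1 ≤ a ∧ 1 ≤ b : contradiction
        exact absurd hab3.1 ha
      · -- a = 0
        rw [mul_zero]
    calc ∑ ab ∈ Finset.HasAntidiagonal.antidiagonal i, (if 1 ≤ ab.1 then d ab.1 * wpos d j ab.2 else 0)
        ≤ ∑ ab ∈ Finset.HasAntidiagonal.antidiagonal i, (A ^ (j+1) * e (i - (j+1))) *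
            (if 1 ≤ ab.1 ∧ 1 ≤ ab.2 then ((catalan (ab.1 - 1) : ℝ) * (catalan (ab.2 - 1) : ℝ)) else 0) :=
          Finset.sum_le_sum key
      _ = (A ^ (j+1) * e (i - (j+1))) * ∑ ab ∈ Finset.HasAntidiagonal.antidiagonal i,
            (if 1 ≤ ab.1 ∧ 1 ≤ ab.2 then ((catalan (ab.1 - 1) : ℝ) * (catalan (ab.2 - 1) : ℝ)) else 0) := by
          rw [Finset.mul_sum]
      _ = A ^ (j+1) * e (i - (j+1)) * (catalan (i - 1) : ℝ) := by
          rw [cat_conv i (by omega)]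


/-- The coefficient sequence, defined by the formal fixed-point recursion. -/
noncomputable def sc (M : ℕ → ℝ) (A C ρ : ℝ) (N : ℕ) : ℕ → ℝ
  | 0 => 0
  | 1 => A
  | i + 2 =>
    C * A * ∑ j ∈ Finset.Icc 2 N, ρ ^ (j-1) * M (j-1) / (j : ℝ) *
      wpos (fun k => if h : k < i + 2 then sc M A C ρ N k else 0) j (i + 2)
  decreasing_by exact h

lemma sc_zero (M : ℕ → ℝ) (A C ρ : ℝ) (N : ℕ) : sc M A C ρ N 0 = 0 := by rw [sc]
lemma sc_one (M : ℕ → ℝ) (A C ρ : ℝ) (N : ℕ) : sc M A C ρ N 1 = A := by rw [sc]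
lemma sc_two (M : ℕ → ℝ) (A C ρ : ℝ) (N : ℕ) (i : ℕ) :
    sc M A C ρ N (i + 2) =
      C * A * ∑ j ∈ Finset.Icc 2 N, ρ ^ (j-1) * M (j-1) / (j : ℝ) *
        wpos (fun k => if k < i + 2 then sc M A C ρ N k else 0) j (i + 2) := by
  rw [sc]
  simp only [dite_eq_ite]


lemma sc_eq (M : ℕ → ℝ) (A C ρ : ℝ) (N : ℕ) (i : ℕ) (hi : 2 ≤ i) :
    sc M A C ρ N i =
      C * A * ∑ j ∈ Finset.Icc 2 N, ρ ^ (j-1) * M (j-1) / (j : ℝ) *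
        wpos (sc M A C ρ N) j i := by
  obtain ⟨m, rfl⟩ : ∃ m, i = m + 2 := ⟨i - 2, by omega⟩
  rw [sc_two]
  congr 1
  apply Finset.sum_congr rfl
  intro j hj
  rw [Finset.mem_Icc] at hj
  congr 1
  apply wpos_congr
  intro k hk hkj
  rw [if_pos (by omega : k < m + 2)]

lemma sc_pos (M : ℕ → ℝ) (hMpos : ∀ k, 0 < M k) (A C ρ : ℝ)
    (hA : 0 < A) (hC : 0 < C) (hρ : 0 < ρ) (N : ℕ) (hN : 2 ≤ N) :
    ∀ i, (0 ≤ sc M A C ρ N i) ∧ (1 ≤ i → 0 < sc M A C ρ N i) := by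
  intro i
  induction i using Nat.strong_induction_on with
  | _ i ih =>
    match i with
    | 0 => exact ⟨le_rfl.trans_eq (sc_zero M A C ρ N).symm, by omega⟩
    | 1 => rw [sc_one]; exact ⟨hA.le, fun _ => hA⟩
    | (m + 2) =>
      set ct : ℕ → ℝ := fun k => if k < m + 2 then sc M A C ρ N k else 0 with hct
      have hctnn : ∀ k, 0 ≤ ct k := by
        intro k
        simp only [hct]
        split_ifs with h
        · exact (ih k h).1
        · exact le_rfl
      have hsum_pos : 0 < ∑ j ∈ Finset.Icc 2 N, ρ ^ (j-1) * M (j-1) / (j : ℝ) *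
          wpos ct j (m + 2) := by
        have hterm_nn : ∀ j ∈ Finset.Icc 2 N,
            0 ≤ ρ ^ (j-1) * M (j-1) / (j : ℝ) * wpos ct j (m + 2) := by
          intro j hj
          rw [Finset.mem_Icc] at hj
          have h1 : (0:ℝ) ≤ ρ ^ (j-1) * M (j-1) / (j : ℝ) := by
            have := (hMpos (j-1)).le
            positivity
          exact mul_nonneg h1 (wpos_nonneg ct hctnn j (m+2))
        have h2mem : 2 ∈ Finset.Icc 2 N := Finset.mem_Icc.2 ⟨le_rfl, hN⟩
        have hterm2 : 0 < ρ ^ (2-1) * M (2-1) / ((2:ℕ) : ℝ) * wpos ct 2 (m + 2) := by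
          have hw : 0 < wpos ct 2 (m + 2) := by
            rw [wpos_succ]
            have hmem : ((1 : ℕ), m + 1) ∈ Finset.HasAntidiagonal.antidiagonal (m + 2) :=
              Finset.HasAntidiagonal.mem_antidiagonal.2 (by omega)
            have hterm : 0 < (if 1 ≤ (( 1:ℕ), m+1).1 then ct ((1:ℕ),m+1).1 * wpos ct 1 ((1:ℕ),m+1).2 else 0) := by
              simp only [le_refl, if_true]
              rw [wpos_one, if_pos (by omega : 1 ≤ m + 1)]
              have hc1 : 0 < ct 1 := by
                simp only [hct]; rw [if_pos (by omega)]; exact (ih 1 (by omega)).2 (by omega)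
              have hcm : 0 < ct (m+1) := by
                simp only [hct]; rw [if_pos (by omega)]; exact (ih (m+1) (by omega)).2 (by omega)
              exact mul_pos hc1 hcm
            refine lt_of_lt_of_le hterm (Finset.single_le_sum (f := fun ab : ℕ × ℕ => if 1 ≤ ab.1 then ct ab.1 * wpos ct 1 ab.2 else 0) ?_ hmem)
            rintro ⟨a, b⟩ _
            simp only
            split_ifs
            · exact mul_nonneg (hctnn a) (wpos_nonneg ct hctnn 1 b)
            · exact le_rfl
          have h1 : (0:ℝ) < ρ ^ (2-1) * M (2-1) / ((2:ℕ):ℝ) := by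
            have := hMpos 1
            norm_num
            positivity
          exact mul_pos h1 hw
        calc (0:ℝ) < ρ ^ (2-1) * M (2-1) / ((2:ℕ) : ℝ) * wpos ct 2 (m + 2) := hterm2
          _ ≤ ∑ j ∈ Finset.Icc 2 N, ρ ^ (j-1) * M (j-1) / (j : ℝ) * wpos ct j (m + 2) :=
            Finset.single_le_sum hterm_nn h2mem
      have : 0 < sc M A C ρ N (m + 2) := by
        rw [sc_two]
        exact mul_pos (mul_pos hC hA) hsum_pos
      exact ⟨this.le, fun _ => this⟩


lemma sc_step (M : ℕ → ℝ) (hMpos : ∀ k, 0 < M k) (A C ρ : ℝ)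
    (hA : 0 < A) (hC : 0 < C) (hρ : 0 < ρ) (N : ℕ) (hN : 2 ≤ N)
    (e : ℕ → ℝ) (he0 : e 0 = 1) (hepos : ∀ k, 0 < e k)
    (hemul : ∀ a b, e a * e b ≤ e (a + b)) (t : ℕ → ℝ)
    (ht0 : ∀ j ∈ Finset.Icc 2 N, 0 ≤ t j)
    (hterm : ∀ j ∈ Finset.Icc 2 N, ρ ^ (j-1) * M (j-1) / (j : ℝ) * A ^ (j-1) ≤ t j * e (j-1))
    (i : ℕ) (h2 : 2 ≤ i)
    (IH : ∀ k, 1 ≤ k → k < i → sc M A C ρ N k ≤ A * e (k-1) * (catalan (k-1) : ℝ)) :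
    sc M A C ρ N i ≤ (C * A * ∑ j ∈ Finset.Icc 2 N, t j) * (A * e (i-1) * (catalan (i-1) : ℝ)) := by
  obtain ⟨m, rfl⟩ : ∃ m, i = m + 2 := ⟨i - 2, by omega⟩
  set d : ℕ → ℝ := fun k => A * e (k - 1) * (catalan (k - 1) : ℝ) with hd
  have hdpos : ∀ k, 0 < d k := fun k => mul_pos (mul_pos hA (hepos _)) (catalan_cast_pos _)
  set ct : ℕ → ℝ := fun k => if k < m + 2 then sc M A C ρ N k else 0 with hct
  have hctnn : ∀ k, 0 ≤ ct k := by
    intro k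
    simp only [hct]
    split_ifs with h
    · exact (sc_pos M hMpos A C ρ hA hC hρ N hN k).1
    · exact le_rfl
  have hctle : ∀ k, ct k ≤ d k := by
    intro k
    simp only [hct]
    split_ifs with h
    · match k with
      | 0 => rw [sc_zero]; exact (hdpos 0).le
      | (k'+1) => exact IH (k'+1) (by omega) h
    · exact (hdpos k).le
  have hAecat : 0 < A * e (m + 2 - 1) * (catalan (m + 2 - 1) : ℝ) :=
    mul_pos (mul_pos hA (hepos _)) (catalan_cast_pos _)
  rw [sc_two]
  have hsum : ∑ j ∈ Finset.Icc 2 N, ρ ^ (j-1) * M (j-1) / (j : ℝ) * wpos ct j (m + 2)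
      ≤ ∑ j ∈ Finset.Icc 2 N, t j * (A * e (m + 2 - 1) * (catalan (m + 2 - 1) : ℝ)) := by
    apply Finset.sum_le_sum
    intro j hj
    have hjIcc := hj
    rw [Finset.mem_Icc] at hj
    have haj : (0:ℝ) ≤ ρ ^ (j-1) * M (j-1) / (j : ℝ) := by
      have := (hMpos (j-1)).le
      positivity
    have hmono : wpos ct j (m+2) ≤ wpos d j (m+2) := wpos_mono ct d hctnn hctle j (m+2)
    by_cases hji : j ≤ m + 2
    · have hwb : wpos d j (m+2) ≤ A ^ j * e (m + 2 - j) * (catalan (m + 2 - 1) : ℝ) :=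
        wpos_bound A hA e he0 hepos hemul j (by omega) (m+2) hji
      calc ρ ^ (j-1) * M (j-1) / (j : ℝ) * wpos ct j (m+2)
          ≤ ρ ^ (j-1) * M (j-1) / (j : ℝ) * (A ^ j * e (m + 2 - j) * (catalan (m + 2 - 1) : ℝ)) :=
            mul_le_mul_of_nonneg_left (hmono.trans hwb) haj
        _ = (ρ ^ (j-1) * M (j-1) / (j : ℝ) * A ^ (j-1)) *
              (A * e (m + 2 - j) * (catalan (m + 2 - 1) : ℝ)) := by
            have : A ^ j = A ^ (j-1) * A := by
              rw [← pow_succ]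
              congr 1
              omega
            rw [this]; ring
        _ ≤ (t j * e (j-1)) * (A * e (m + 2 - j) * (catalan (m + 2 - 1) : ℝ)) := by
            apply mul_le_mul_of_nonneg_right (hterm j hjIcc)
            exact le_of_lt (mul_pos (mul_pos hA (hepos _)) (catalan_cast_pos _))
        _ = (t j) * (A * (e (j-1) * e (m + 2 - j)) * (catalan (m + 2 - 1) : ℝ)) := by ring
        _ ≤ t j * (A * e (m + 2 - 1) * (catalan (m + 2 - 1) : ℝ)) := by
            apply mul_le_mul_of_nonneg_left _ (ht0 j hjIcc)
            apply mul_le_mul_of_nonneg_right _ (catalan_cast_pos _).le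
            apply mul_le_mul_of_nonneg_left _ hA.le
            have harith : (j - 1) + (m + 2 - j) = m + 2 - 1 := by omega
            calc e (j-1) * e (m + 2 - j) ≤ e ((j-1) + (m + 2 - j)) := hemul _ _
              _ = e (m + 2 - 1) := by rw [harith]
    · have hz : wpos ct j (m+2) ≤ 0 := by
        rw [← wpos_eq_zero d j (m+2) (by omega)] at *
        exact hmono
      calc ρ ^ (j-1) * M (j-1) / (j : ℝ) * wpos ct j (m+2) ≤ 0 := by
            exact mul_nonpos_of_nonneg_of_nonpos haj hz
        _ ≤ t j * (A * e (m + 2 - 1) * (catalan (m + 2 - 1) : ℝ)) :=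
            mul_nonneg (ht0 j hjIcc) hAecat.le
  calc C * A * ∑ j ∈ Finset.Icc 2 N, ρ ^ (j-1) * M (j-1) / (j : ℝ) * wpos ct j (m + 2)
      ≤ C * A * ∑ j ∈ Finset.Icc 2 N, t j * (A * e (m + 2 - 1) * (catalan (m + 2 - 1) : ℝ)) := by
        apply mul_le_mul_of_nonneg_left hsum (by positivity)
    _ = (C * A * ∑ j ∈ Finset.Icc 2 N, t j) * (A * e (m + 2 - 1) * (catalan (m + 2 - 1) : ℝ)) := by
        rw [← Finset.sum_mul]; ring

lemma sc_main (M : ℕ → ℝ) (hMpos : ∀ k, 0 < M k) (A C ρ : ℝ)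
    (hA : 0 < A) (hC : 0 < C) (hρ : 0 < ρ) (N : ℕ) (hN : 2 ≤ N)
    (e : ℕ → ℝ) (he0 : e 0 = 1) (hepos : ∀ k, 0 < e k)
    (hemul : ∀ a b, e a * e b ≤ e (a + b)) (t : ℕ → ℝ)
    (ht0 : ∀ j ∈ Finset.Icc 2 N, 0 ≤ t j)
    (hterm : ∀ j ∈ Finset.Icc 2 N, ρ ^ (j-1) * M (j-1) / (j : ℝ) * A ^ (j-1) ≤ t j * e (j-1))
    (hsum : C * A * ∑ j ∈ Finset.Icc 2 N, t j ≤ 1) :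
    ∀ i, 1 ≤ i → sc M A C ρ N i ≤ A * e (i-1) * (catalan (i-1) : ℝ) := by
  intro i
  induction i using Nat.strong_induction_on with
  | _ i ih =>
    intro hi
    match i, hi with
    | 1, _ => rw [sc_one]; simp [he0]
    | (m + 2), _ =>
      have hstep := sc_step M hMpos A C ρ hA hC hρ N hN e he0 hepos hemul t ht0 hterm
        (m+2) (by omega) (fun k hk1 hk2 => ih k hk2 hk1)
      refine hstep.trans ?_
      have hAecat : 0 < A * e (m + 2 - 1) * (catalan (m + 2 - 1) : ℝ) :=
        mul_pos (mul_pos hA (hepos _)) (catalan_cast_pos _)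
      nlinarith [hAecat]


lemma M_ratio (M : ℕ → ℝ) (hMpos : ∀ k, 0 < M k)
    (hlc : ∀ k : ℕ, 1 ≤ k → (M k) ^ 2 ≤ M (k - 1) * M (k + 1)) :
    ∀ l k, k ≤ l → M (k+1) * M l ≤ M k * M (l+1) := by
  intro l
  induction l with
  | zero => intro k hk; interval_cases k; ring_nf; exact le_rfl
  | succ l ih =>
    intro k hk
    rcases Nat.eq_or_lt_of_le hk with h | h
    · subst h; ring_nf; exact le_rfl
    · have hkl : k ≤ l := by omega
      have h1 := ih k hkl
      have h2 := hlc (l+1) (by omega)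
      simp only [Nat.add_sub_cancel] at h2
      have hMl := hMpos l
      have hMl1 := hMpos (l+1)
      have hMk := hMpos k
      have hMk1 := hMpos (k+1)
      have hMl2 := hMpos (l+2)
      nlinarith [mul_le_mul h1 h2 (by positivity) (by positivity)]

lemma M_mul (M : ℕ → ℝ) (hMpos : ∀ k, 0 < M k) (hM0 : M 0 = 1)
    (hlc : ∀ k : ℕ, 1 ≤ k → (M k) ^ 2 ≤ M (k - 1) * M (k + 1)) :
    ∀ a b, M a * M b ≤ M (a + b) := by
  intro a
  induction a with
  | zero => intro b; rw [hM0, one_mul, Nat.zero_add]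
  | succ a ih =>
    intro b
    have h1 := ih b
    have h2 := M_ratio M hMpos hlc (a + b) a (by omega)
    have hMa := hMpos a
    have hMab := hMpos (a+b)
    have hMb := hMpos b
    have hMa1 := hMpos (a+1)
    have hMab1 := hMpos (a+b+1)
    have : a + 1 + b = a + b + 1 := by omega
    rw [this]
    nlinarith [mul_le_mul h1 h2 (by positivity) (by positivity)]

lemma centralBinom_le_four_pow (n : ℕ) : Nat.centralBinom n ≤ 4 ^ n := by
  have h1 : Nat.centralBinom n = (2*n).choose n := Nat.centralBinom_eq_two_mul_choose n
  have h2 : (2*n).choose n ≤ ∑ m ∈ Finset.range (2*n + 1), (2*n).choose m :=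
    Finset.single_le_sum (fun m _ => Nat.zero_le _) (Finset.mem_range.2 (by omega))
  have h3 : ∑ m ∈ Finset.range (2*n + 1), (2*n).choose m = 2 ^ (2*n) := Nat.sum_range_choose (2*n)
  have h4 : (2:ℕ) ^ (2*n) = 4 ^ n := by
    rw [pow_mul]; norm_num
  omega

lemma catalan_cast_le_four_pow (n : ℕ) : (catalan n : ℝ) ≤ 4 ^ n := by
  have h1 : catalan n ≤ 4 ^ n := by
    have h := succ_mul_catalan_eq_centralBinom n
    have h2 := centralBinom_le_four_pow n
    nlinarith [catalan_pos' n]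
  calc (catalan n : ℝ) ≤ ((4^n : ℕ) : ℝ) := Nat.cast_le.2 h1
    _ = 4 ^ n := by push_cast; ring

lemma mul_catalan_cast (i : ℕ) (hi : 1 ≤ i) :
    (i : ℝ) * (catalan (i-1) : ℝ) = (Nat.centralBinom (i-1) : ℝ) := by
  have h := succ_mul_catalan_eq_centralBinom (i-1)
  have h2 : (i - 1) + 1 = i := by omega
  rw [h2] at h
  exact_mod_cast congrArg (fun n : ℕ => (n : ℝ)) h


lemma sum_Icc_pow_le (x : ℝ) (hx0 : 0 ≤ x) (hx1 : x < 1) (N : ℕ) :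
    ∑ j ∈ Finset.Icc 2 N, x ^ (j-1) ≤ x / (1 - x) := by
  rw [← Finset.Ico_add_one_right_eq_Icc, Finset.sum_Ico_eq_sum_range]
  have h1 : ∀ i ∈ Finset.range (N + 1 - 2), x ^ (2 + i - 1) = x * x ^ i := by
    intro i _
    have : 2 + i - 1 = i + 1 := by omega
    rw [this, pow_succ]; ring
  rw [Finset.sum_congr rfl h1, ← Finset.mul_sum]
  rw [div_eq_mul_inv]
  apply mul_le_mul_of_nonneg_left _ hx0
  calc ∑ i ∈ Finset.range (N + 1 - 2), x ^ i
      ≤ ∑' i : ℕ, x ^ i := by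
        apply Summable.sum_le_tsum _ (fun i _ => by positivity)
        exact summable_geometric_of_lt_one hx0 hx1
    _ = (1 - x)⁻¹ := tsum_geometric_of_lt_one hx0 hx1

lemma sc_upper (M : ℕ → ℝ) (hMpos : ∀ k, 0 < M k) (hM0 : M 0 = 1)
    (hlc : ∀ k : ℕ, 1 ≤ k → (M k) ^ 2 ≤ M (k - 1) * M (k + 1))
    (A C ρ : ℝ) (hA : 0 < A) (hC : 0 < C) (hρ : 0 < ρ) (N : ℕ) (hN : 2 ≤ N) :
    ∀ i : ℕ, 2 ≤ i → (i : ℝ) * sc M A C ρ N i < A * (4*A*(C*A+1)*ρ) ^ (i-1) * M (i-1) := by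
  obtain ⟨μ, hμ⟩ : ∃ μ : ℝ, μ = A * (C*A+1) * ρ := ⟨_, rfl⟩
  have hμpos : 0 < μ := by rw [hμ]; positivity
  set e : ℕ → ℝ := fun k => μ ^ k * M k with he
  have he0 : e 0 = 1 := by simp [he, hM0]
  have hepos : ∀ k, 0 < e k := fun k => by have := hMpos k; positivity
  have hemul : ∀ a b, e a * e b ≤ e (a + b) := by
    intro a b
    simp only [he]
    have h := M_mul M hMpos hM0 hlc a b
    calc μ ^ a * M a * (μ ^ b * M b) = μ ^ (a+b) * (M a * M b) := by rw [pow_add]; ring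
      _ ≤ μ ^ (a+b) * M (a+b) := by
        apply mul_le_mul_of_nonneg_left h (by positivity)
  obtain ⟨x, hx⟩ : ∃ x : ℝ, x = 1 / (C*A+1) := ⟨_, rfl⟩
  have hCA : 0 < C * A := mul_pos hC hA
  have hx0 : 0 ≤ x := by rw [hx]; positivity
  have hx1 : x < 1 := by
    rw [hx, div_lt_one (by linarith)]; linarith
  set t : ℕ → ℝ := fun j => x ^ (j-1) / j with ht
  have ht0 : ∀ j ∈ Finset.Icc 2 N, 0 ≤ t j := by
    intro j hj
    rw [Finset.mem_Icc] at hj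
    have : (0:ℝ) < j := by exact_mod_cast (by omega : 0 < j)
    simp only [ht]; positivity
  have hterm : ∀ j ∈ Finset.Icc 2 N,
      ρ ^ (j-1) * M (j-1) / (j : ℝ) * A ^ (j-1) ≤ t j * e (j-1) := by
    intro j hj
    rw [Finset.mem_Icc] at hj
    apply le_of_eq
    simp only [ht, he]
    have hxμ : x ^ (j-1) * μ ^ (j-1) = (ρ * A) ^ (j-1) := by
      rw [← mul_pow]
      congr 1
      rw [hx, hμ]
      field_simp
    have hj0 : ((j:ℝ)) ≠ 0 := by
      have : (0:ℝ) < j := by exact_mod_cast (by omega : 0 < j)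
      exact this.ne'
    field_simp
    calc ρ ^ (j-1) * M (j-1) * A ^ (j-1) = (ρ * A) ^ (j-1) * M (j-1) := by
          rw [mul_pow]; ring
      _ = x ^ (j-1) * μ ^ (j-1) * M (j-1) := by rw [hxμ]
      _ = M (j-1) * x ^ (j-1) * μ ^ (j-1) := by ring
  have hsumhalf : C * A * ∑ j ∈ Finset.Icc 2 N, t j ≤ 1/2 := by
    have h1 : ∑ j ∈ Finset.Icc 2 N, t j ≤ ∑ j ∈ Finset.Icc 2 N, (1/2) * x ^ (j-1) := by
      apply Finset.sum_le_sum
      intro j hj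
      rw [Finset.mem_Icc] at hj
      simp only [ht]
      rw [div_eq_mul_inv, mul_comm]
      apply mul_le_mul_of_nonneg_right _ (by positivity)
      rw [inv_le_iff_one_le_mul₀ (by exact_mod_cast (by omega : 0 < j))]
      have h2j : (2:ℝ) ≤ j := by exact_mod_cast hj.1
      nlinarith
    have h2 : ∑ j ∈ Finset.Icc 2 N, (1/2) * x ^ (j-1) ≤ (1/2) * (x / (1-x)) := by
      rw [← Finset.mul_sum]
      apply mul_le_mul_of_nonneg_left (sum_Icc_pow_le x hx0 hx1 N) (by norm_num)
    have h3 : x / (1 - x) = 1 / (C * A) := by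
      have hne : (1:ℝ) - x ≠ 0 := by linarith
      rw [hx] at hne ⊢
      rw [div_eq_div_iff hne hCA.ne']
      field_simp
      ring
    calc C * A * ∑ j ∈ Finset.Icc 2 N, t j ≤ C * A * ((1/2) * (1/(C*A))) := by
          apply mul_le_mul_of_nonneg_left _ hCA.le
          rw [← h3]
          exact h1.trans h2
      _ = 1/2 := by field_simp
  have hmain : ∀ i, 1 ≤ i → sc M A C ρ N i ≤ A * e (i-1) * (catalan (i-1) : ℝ) :=
    sc_main M hMpos A C ρ hA hC hρ N hN e he0 hepos hemul t ht0 hterm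
      (hsumhalf.trans (by norm_num))
  intro i hi
  have hstep := sc_step M hMpos A C ρ hA hC hρ N hN e he0 hepos hemul t ht0 hterm i hi
    (fun k hk1 hk2 => hmain k hk1)
  have hAecat : 0 < A * e (i - 1) * (catalan (i - 1) : ℝ) :=
    mul_pos (mul_pos hA (hepos _)) (catalan_cast_pos _)
  have hsc_le : sc M A C ρ N i ≤ (1/2) * (A * e (i-1) * (catalan (i-1) : ℝ)) := by
    refine hstep.trans ?_
    apply mul_le_mul_of_nonneg_right hsumhalf hAecat.le
  have hipos : (0:ℝ) < i := by exact_mod_cast (by omega : 0 < i)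
  calc (i:ℝ) * sc M A C ρ N i
      ≤ (i:ℝ) * ((1/2) * (A * e (i-1) * (catalan (i-1) : ℝ))) :=
        mul_le_mul_of_nonneg_left hsc_le hipos.le
    _ = (1/2) * (A * e (i-1)) * ((i:ℝ) * (catalan (i-1) : ℝ)) := by ring
    _ = (1/2) * (A * e (i-1)) * (Nat.centralBinom (i-1) : ℝ) := by
        rw [mul_catalan_cast i (by omega)]
    _ ≤ (1/2) * (A * e (i-1)) * (4 ^ (i-1) : ℝ) := by
        apply mul_le_mul_of_nonneg_left _ (by have := hepos (i-1); positivity)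
        calc (Nat.centralBinom (i-1) : ℝ) ≤ ((4 ^ (i-1) : ℕ) : ℝ) :=
              Nat.cast_le.2 (centralBinom_le_four_pow (i-1))
          _ = (4:ℝ) ^ (i-1) := by push_cast; ring
    _ = (1/2) * (A * (4*μ) ^ (i-1) * M (i-1)) := by
        simp only [he]
        rw [mul_pow 4 μ (i-1)]
        ring
    _ < A * (4*μ) ^ (i-1) * M (i-1) := by
        have : 0 < A * (4*μ) ^ (i-1) * M (i-1) := by
          have := hMpos (i-1); positivity
        linarith
    _ = A * (4*A*(C*A+1)*ρ) ^ (i-1) * M (i-1) := by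
        rw [hμ]
        have : 4 * (A * (C*A+1) * ρ) = 4*A*(C*A+1)*ρ := by ring
        rw [this]


lemma sc_geom (M : ℕ → ℝ) (hMpos : ∀ k, 0 < M k) (hM0 : M 0 = 1)
    (A C ρ : ℝ) (hA : 0 < A) (hC : 0 < C) (hρ : 0 < ρ) (N : ℕ) (hN : 2 ≤ N) :
    ∃ q : ℝ, 0 < q ∧ ∀ i, 1 ≤ i → sc M A C ρ N i ≤ A * q ^ (i-1) * (catalan (i-1) : ℝ) := by
  obtain ⟨S, hS⟩ : ∃ S : ℝ, S = ∑ j ∈ Finset.Icc 2 N, M (j-1) := ⟨_, rfl⟩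
  have hSpos : 0 < S := by
    rw [hS]
    apply Finset.sum_pos (fun j _ => hMpos (j-1))
    exact ⟨2, Finset.mem_Icc.2 ⟨le_rfl, hN⟩⟩
  obtain ⟨q, hq⟩ : ∃ q : ℝ, q = ρ * A * (1 + C * A * S) := ⟨_, rfl⟩
  have hqpos : 0 < q := by
    rw [hq]
    have : 0 < 1 + C * A * S := by positivity
    positivity
  have hρAq : ρ * A / q ≤ 1 := by
    rw [hq, div_le_one (by positivity)]
    nlinarith [mul_pos (mul_pos hρ hA) (mul_pos (mul_pos hC hA) hSpos)]
  have hρAq0 : 0 ≤ ρ * A / q := by positivity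
  refine ⟨q, hqpos, ?_⟩
  set e : ℕ → ℝ := fun k => q ^ k with he
  have he0 : e 0 = 1 := by simp [he]
  have hepos : ∀ k, 0 < e k := fun k => pow_pos hqpos k
  have hemul : ∀ a b, e a * e b ≤ e (a + b) := by
    intro a b; simp only [he]; rw [pow_add]
  set t : ℕ → ℝ := fun j => (ρ * A / q) ^ (j-1) * M (j-1) / j with ht
  have ht0 : ∀ j ∈ Finset.Icc 2 N, 0 ≤ t j := by
    intro j hj
    rw [Finset.mem_Icc] at hj
    have hj0 : (0:ℝ) < j := by exact_mod_cast (by omega : 0 < j)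
    have := (hMpos (j-1)).le
    simp only [ht]; positivity
  have hterm : ∀ j ∈ Finset.Icc 2 N,
      ρ ^ (j-1) * M (j-1) / (j : ℝ) * A ^ (j-1) ≤ t j * e (j-1) := by
    intro j hj
    rw [Finset.mem_Icc] at hj
    apply le_of_eq
    simp only [ht, he]
    rw [div_pow, mul_pow]
    have hj0 : ((j:ℝ)) ≠ 0 := by
      have : (0:ℝ) < j := by exact_mod_cast (by omega : 0 < j)
      exact this.ne'
    field_simp
  have hsum : C * A * ∑ j ∈ Finset.Icc 2 N, t j ≤ 1 := by
    have h1 : ∑ j ∈ Finset.Icc 2 N, t j ≤ ∑ j ∈ Finset.Icc 2 N, (ρ * A / q) * M (j-1) := by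
      apply Finset.sum_le_sum
      intro j hj
      rw [Finset.mem_Icc] at hj
      have hj1 : (1:ℝ) ≤ j := by exact_mod_cast (by omega : 1 ≤ j)
      have hMj := hMpos (j-1)
      simp only [ht]
      have hp : (ρ * A / q) ^ (j-1) ≤ (ρ * A / q) ^ 1 :=
        pow_le_pow_of_le_one hρAq0 hρAq (by omega)
      rw [pow_one] at hp
      calc (ρ * A / q) ^ (j-1) * M (j-1) / j ≤ (ρ * A / q) ^ (j-1) * M (j-1) / 1 := by
            apply div_le_div_of_nonneg_left _ _ hj1 <;> positivity
        _ = (ρ * A / q) ^ (j-1) * M (j-1) := by rw [div_one]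
        _ ≤ (ρ * A / q) * M (j-1) := mul_le_mul_of_nonneg_right hp hMj.le
    have h2 : ∑ j ∈ Finset.Icc 2 N, (ρ * A / q) * M (j-1) = (ρ * A / q) * S := by
      rw [hS, Finset.mul_sum]
    calc C * A * ∑ j ∈ Finset.Icc 2 N, t j ≤ C * A * ((ρ * A / q) * S) := by
          apply mul_le_mul_of_nonneg_left _ (by positivity)
          rw [← h2]; exact h1
      _ ≤ 1 := by
          have hrw : C * A * ((ρ * A / q) * S) = (C * A * (ρ * A) * S) / q := by
            field_simp
          rw [hrw, div_le_one hqpos, hq]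
          nlinarith [mul_pos (mul_pos hρ hA) (mul_pos (mul_pos hC hA) hSpos)]
  exact fun i hi => by
    have := sc_main M hMpos A C ρ hA hC hρ N hN e he0 hepos hemul t ht0 hterm hsum i hi
    simpa [he] using this


lemma pow_tsum (c : ℕ → ℝ) (hc0 : c 0 = 0) (s : ℝ)
    (h1 : Summable fun i => ‖c i * s ^ i‖) :
    ∀ j, 1 ≤ j → (Summable fun i => ‖wpos c j i * s ^ i‖) ∧
      (∑' i, c i * s ^ i) ^ j = ∑' i, wpos c j i * s ^ i := by
  have hw1 : ∀ i, wpos c 1 i = c i := by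
    intro i
    rw [wpos_one]
    split_ifs with h
    · rfl
    · have : i = 0 := by omega
      rw [this, hc0]
  intro j hj
  induction j, hj using Nat.le_induction with
  | base =>
    constructor
    · apply h1.congr
      intro i
      rw [hw1]
    · rw [pow_one]
      exact (tsum_congr (fun i => by rw [hw1])).symm
  | succ j hj ih =>
    obtain ⟨Sj, Ej⟩ := ih
    have hinner : ∀ n, ∑ kl ∈ Finset.HasAntidiagonal.antidiagonal n,
        (c kl.1 * s ^ kl.1) * (wpos c j kl.2 * s ^ kl.2) = wpos c (j+1) n * s ^ n := by
      intro n
      rw [wpos_succ, Finset.sum_mul]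
      apply Finset.sum_congr rfl
      rintro ⟨a, b⟩ hab
      rw [Finset.HasAntidiagonal.mem_antidiagonal] at hab
      simp only
      split_ifs with ha
      · rw [← hab, pow_add]; ring
      · have ha0 : a = 0 := by omega
        rw [ha0, hc0]; ring
    have hnorm : Summable fun n => ‖wpos c (j+1) n * s ^ n‖ := by
      have hb := summable_norm_sum_mul_antidiagonal_of_summable_norm (f := fun i => c i * s ^ i)
        (g := fun i => wpos c j i * s ^ i) h1 Sj
      exact hb.congr fun n => by simpa using congrArg norm (hinner n)
    refine ⟨hnorm, ?_⟩
    calc (∑' i, c i * s ^ i) ^ (j+1) = (∑' i, c i * s ^ i) * (∑' i, c i * s ^ i) ^ j := by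
          rw [pow_succ']
      _ = (∑' i, c i * s ^ i) * (∑' i, wpos c j i * s ^ i) := by rw [Ej]
      _ = ∑' n, ∑ kl ∈ Finset.HasAntidiagonal.antidiagonal n, (c kl.1 * s ^ kl.1) * (wpos c j kl.2 * s ^ kl.2) :=
          tsum_mul_tsum_eq_tsum_sum_antidiagonal_of_summable_norm h1 Sj
      _ = ∑' n, wpos c (j+1) n * s ^ n := tsum_congr hinner

end St3

/-- Given a log-convex weight sequence `M`, constants `A, C, ρ > 0` and
`N ≥ 2`, with `ψ_N(t) = C·A·Σ_{j=2}^N (ρ^{j-1} M_{j-1}/j) t^j`, there are coefficients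
`c_i` and `ε > 0` so that `g(s) = Σ_{i≥1} c_i s^i` converges for `|s| < ε`, solves
`g(s) = A·s + ψ_N(g(s))` there, has `c₁ = A`, and `0 < i·c_i < A·(4A(CA+1)ρ)^{i-1}·M_{i-1}`
for `2 ≤ i ≤ N`. -/
theorem statement_3 (M : ℕ → ℝ) (hMpos : ∀ k, 0 < M k) (hM0 : M 0 = 1) (hM01 : 1 ≤ M 1)
    (hlc : ∀ k : ℕ, 1 ≤ k → (M k) ^ 2 ≤ M (k - 1) * M (k + 1))
    (A C ρ : ℝ) (hA : 0 < A) (hC : 0 < C) (hρ : 0 < ρ) (N : ℕ) (hN : 2 ≤ N) :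
    ∃ (c : ℕ → ℝ) (ε : ℝ), 0 < ε ∧ c 0 = 0 ∧ c 1 = A ∧
      (∀ s : ℝ, |s| < ε → Summable (fun i : ℕ => c i * s ^ i)) ∧
      (∀ s : ℝ, |s| < ε →
        (∑' i : ℕ, c i * s ^ i) =
          A * s + C * A * ∑ j ∈ Finset.Icc 2 N,
            ρ ^ (j - 1) * M (j - 1) / (j : ℝ) * (∑' i : ℕ, c i * s ^ i) ^ j) ∧
      (∀ i : ℕ, 2 ≤ i → i ≤ N →
        0 < (i : ℝ) * c i ∧
          (i : ℝ) * c i < A * (4 * A * (C * A + 1) * ρ) ^ (i - 1) * M (i - 1)) := by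
  classical
  set c : ℕ → ℝ := St3.sc M A C ρ N with hc
  obtain ⟨q, hqpos, hgeo⟩ := St3.sc_geom M hMpos hM0 A C ρ hA hC hρ N hN
  have hcnn : ∀ k, 0 ≤ c k := fun k => (St3.sc_pos M hMpos A C ρ hA hC hρ N hN k).1
  have hcpos : ∀ k, 1 ≤ k → 0 < c k := fun k hk =>
    (St3.sc_pos M hMpos A C ρ hA hC hρ N hN k).2 hk
  have hc0 : c 0 = 0 := St3.sc_zero M A C ρ N
  have hc1 : c 1 = A := St3.sc_one M A C ρ N
  have hq1 : (0:ℝ) < 4 * q + 1 := by linarith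
  have hns : ∀ s : ℝ, |s| < 1 / (4 * q + 1) → Summable fun i => ‖c i * s ^ i‖ := by
    intro s hs
    obtain ⟨r, hr⟩ : ∃ r : ℝ, r = (4 * q + 1) * |s| := ⟨_, rfl⟩
    have hr0 : 0 ≤ r := by rw [hr]; positivity
    have hr1 : r < 1 := by
      rw [hr]
      calc (4 * q + 1) * |s| < (4 * q + 1) * (1 / (4 * q + 1)) := by
            exact mul_lt_mul_of_pos_left hs hq1
        _ = 1 := by field_simp
    have hbound : ∀ i, ‖c i * s ^ i‖ ≤ A * r ^ i := by
      intro i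
      match i with
      | 0 =>
        rw [hc0]
        simp [hA.le]
      | (m+1) =>
        have h1 : ‖c (m+1) * s ^ (m+1)‖ = c (m+1) * |s| ^ (m+1) := by
          rw [norm_mul, Real.norm_eq_abs, Real.norm_eq_abs, abs_pow,
            abs_of_nonneg (hcnn (m+1))]
        rw [h1]
        have h2 : c (m+1) ≤ A * q ^ m * (4:ℝ) ^ m := by
          have h3 := hgeo (m+1) (by omega)
          simp only [Nat.add_sub_cancel] at h3
          refine h3.trans ?_
          apply mul_le_mul_of_nonneg_left (St3.catalan_cast_le_four_pow m) (by positivity)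
        have h4 : (0:ℝ) ≤ |s| ^ (m+1) := by positivity
        calc c (m+1) * |s| ^ (m+1) ≤ (A * q ^ m * 4 ^ m) * |s| ^ (m+1) :=
              mul_le_mul_of_nonneg_right h2 h4
          _ = A * ((4*q*|s|) ^ m) * |s| := by simp only [mul_pow, pow_succ]; ring
          _ ≤ A * (r ^ m) * r := by
              have hb1 : 4*q*|s| ≤ r := by
                rw [hr]
                have := abs_nonneg s
                nlinarith
              have hb2 : |s| ≤ r := by
                rw [hr]
                have := abs_nonneg s
                nlinarith
              have hb3 : (0:ℝ) ≤ 4*q*|s| := by positivity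
              apply mul_le_mul (mul_le_mul_of_nonneg_left (pow_le_pow_left₀ hb3 hb1 m) hA.le)
                hb2 (abs_nonneg s) (by positivity)
          _ = A * r ^ (m+1) := by rw [pow_succ]; ring
    apply Summable.of_nonneg_of_le (fun i => norm_nonneg _) hbound
    exact (summable_geometric_of_lt_one hr0 hr1).mul_left A
  refine ⟨c, 1 / (4 * q + 1), by positivity, hc0, hc1, ?_, ?_, ?_⟩
  · exact fun s hs => (hns s hs).of_norm
  · intro s hs
    have h1 := hns s hs
    have pw : ∀ j, 1 ≤ j → (Summable fun i => ‖St3.wpos c j i * s ^ i‖) ∧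
        (∑' i, c i * s ^ i) ^ j = ∑' i, St3.wpos c j i * s ^ i :=
      St3.pow_tsum c hc0 s h1
    have hcoeff : ∀ i, c i * s ^ i =
        (if i = 1 then A else 0) * s ^ i +
        ∑ j ∈ Finset.Icc 2 N, (C * A * (ρ ^ (j-1) * M (j-1) / (j:ℝ))) * (St3.wpos c j i * s ^ i) := by
      intro i
      have base : c i = (if i = 1 then A else 0) +
          C * A * ∑ j ∈ Finset.Icc 2 N, ρ ^ (j-1) * M (j-1) / (j:ℝ) * St3.wpos c j i := by
        match i with
        | 0 =>
          rw [hc0, if_neg (by omega : ¬ (0:ℕ) = 1)]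
          have hz : ∀ j ∈ Finset.Icc 2 N, ρ ^ (j-1) * M (j-1) / (j:ℝ) * St3.wpos c j 0 = 0 := by
            intro j hj
            rw [Finset.mem_Icc] at hj
            rw [St3.wpos_eq_zero c j 0 (by omega), mul_zero]
          rw [Finset.sum_congr rfl hz]
          simp
        | 1 =>
          rw [hc1, if_pos rfl]
          have hz : ∀ j ∈ Finset.Icc 2 N, ρ ^ (j-1) * M (j-1) / (j:ℝ) * St3.wpos c j 1 = 0 := by
            intro j hj
            rw [Finset.mem_Icc] at hj
            rw [St3.wpos_eq_zero c j 1 (by omega), mul_zero]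
          rw [Finset.sum_congr rfl hz]
          simp
        | (m+2) =>
          rw [if_neg (by omega : ¬ (m+2 : ℕ) = 1)]
          rw [show c (m+2) = St3.sc M A C ρ N (m+2) from rfl,
            St3.sc_eq M A C ρ N (m+2) (by omega)]
          simp
          exact Or.inl rfl
      calc c i * s ^ i = ((if i = 1 then A else 0) +
            C * A * ∑ j ∈ Finset.Icc 2 N, ρ ^ (j-1) * M (j-1) / (j:ℝ) * St3.wpos c j i) * s ^ i := by
            rw [← base]
        _ = (if i = 1 then A else 0) * s ^ i +
            ∑ j ∈ Finset.Icc 2 N, (C * A * (ρ ^ (j-1) * M (j-1) / (j:ℝ))) * (St3.wpos c j i * s ^ i) := by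
            rw [add_mul, Finset.mul_sum, Finset.sum_mul]
            congr 1
            apply Finset.sum_congr rfl
            intro j _
            ring
    have hsum2 : ∀ j ∈ Finset.Icc 2 N,
        Summable (fun i => (C * A * (ρ ^ (j-1) * M (j-1) / (j:ℝ))) * (St3.wpos c j i * s ^ i)) := by
      intro j hj
      rw [Finset.mem_Icc] at hj
      exact ((pw j (by omega)).1.of_norm).mul_left _
    have hS1 : Summable (fun i => (if i = 1 then A else 0) * s ^ i) := by
      apply summable_of_ne_finset_zero (s := {1})
      intro b hb
      simp only [Finset.mem_singleton] at hb
      rw [if_neg hb, zero_mul]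
    have hS2 : Summable (fun i => ∑ j ∈ Finset.Icc 2 N,
        (C * A * (ρ ^ (j-1) * M (j-1) / (j:ℝ))) * (St3.wpos c j i * s ^ i)) :=
      summable_sum hsum2
    calc ∑' i, c i * s ^ i
        = ∑' i, ((if i = 1 then A else 0) * s ^ i +
            ∑ j ∈ Finset.Icc 2 N, (C * A * (ρ ^ (j-1) * M (j-1) / (j:ℝ))) * (St3.wpos c j i * s ^ i)) :=
          tsum_congr hcoeff
      _ = (∑' i, (if i = 1 then A else 0) * s ^ i) +
          ∑' i, ∑ j ∈ Finset.Icc 2 N, (C * A * (ρ ^ (j-1) * M (j-1) / (j:ℝ))) * (St3.wpos c j i * s ^ i) :=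
          Summable.tsum_add hS1 hS2
      _ = A * s + C * A * ∑ j ∈ Finset.Icc 2 N,
            ρ ^ (j - 1) * M (j - 1) / (j : ℝ) * (∑' i : ℕ, c i * s ^ i) ^ j := by
          congr 1
          · rw [tsum_eq_single 1]
            · simp
            · intro b hb
              rw [if_neg hb, zero_mul]
          · rw [Summable.tsum_finsetSum hsum2]
            rw [Finset.mul_sum]
            apply Finset.sum_congr rfl
            intro j hj
            rw [Finset.mem_Icc] at hj
            rw [tsum_mul_left, (pw j (by omega)).2]
            ring
  · intro i h2 hN2
    constructor
    · have hci := hcpos i (by omega)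
      have hipos : (0:ℝ) < i := by exact_mod_cast (by omega : 0 < i)
      positivity
    · exact St3.sc_upper M hMpos hM0 hlc A C ρ hA hC hρ N hN i h2
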